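/- In a connected graph of diameter at most two, every cycle is homotopically equivalent (in the sense of edge-path homotopy in the 2-dimensional clique complex) to a product of cycles of length at most five. -/

import Mathlib

/-- Edge-path homotopy in the 2-dimensional clique complex of a graph:
the equivalence relation on paths generated by insertion/deletion of repetitions
`x,x`, returns `x,y,x`, and triangles `x,y,z,x` with `x,y,z` pairwise adjacent. -/
inductive Homotopic {V : Type*} (adj : V → V → Prop) : List V → List V → Prop
  | refl (p : List V) : Homotopic adj p p
  | symm {p q : List V} : Homotopic adj p q → Homotopic adj q p
  | trans {p q r : List V} : Homotopic adj p q → Homotopic adj q r → Homotopic adj p r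
  | rep (X Y : List V) (x : V) : Homotopic adj (X ++ x :: Y) (X ++ x :: x :: Y)
  | ret (X Y : List V) (x y : V) : adj x y →
      Homotopic adj (X ++ x :: Y) (X ++ x :: y :: x :: Y)
  | tri (X Y : List V) (x y z : V) : adj x y → adj y z → adj z x →
      Homotopic adj (X ++ x :: Y) (X ++ x :: y :: z :: x :: Y)

/-- Concatenation of two paths sharing an endpoint (the product of cycles based
at a common point). -/
def glue {V : Type*} (p q : List V) : List V := p ++ q.tail

/-- A conjugated cycle of length at most five based at `x₀`: a closed path of the
form `w · s · w⁻¹` where `w` is a path from `x₀` to some vertex and `s` is a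
closed path there with at most five edges (at most six vertices). -/
def ConjSmall {V : Type*} (adj : V → V → Prop) (x₀ : V) (c : List V) : Prop :=
  ∃ w s : List V, w.Chain' adj ∧ s.Chain' adj ∧ w.head? = some x₀ ∧
    s.head? = w.getLast? ∧ s.getLast? = w.getLast? ∧ s.length ≤ 6 ∧
    c = w ++ s.tail ++ w.reverse.tail

/-- Homotopy is preserved by appending fixed lists on both sides. -/
lemma Homotopic.context {V : Type*} {adj : V → V → Prop} {p q : List V}
    (h : Homotopic adj p q) (A B : List V) :
    Homotopic adj (A ++ p ++ B) (A ++ q ++ B) := by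
  induction h with
  | refl p => exact .refl _
  | symm _ ih => exact .symm ih
  | trans _ _ ih1 ih2 => exact .trans ih1 ih2
  | rep X Y x =>
      have := Homotopic.rep (adj := adj) (A ++ X) (Y ++ B) x
      simpa [List.append_assoc] using this
  | ret X Y x y hxy =>
      have := Homotopic.ret (adj := adj) (A ++ X) (Y ++ B) x y hxy
      simpa [List.append_assoc] using this
  | tri X Y x y z h1 h2 h3 =>
      have := Homotopic.tri (adj := adj) (A ++ X) (Y ++ B) x y z h1 h2 h3
      simpa [List.append_assoc] using this

/-- Inserting a round trip along a chain at a vertex is a homotopy. -/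
lemma Homotopic.ins {V : Type*} {adj : V → V → Prop} :
    ∀ (u : List V) (x : V) (X Y : List V), List.Chain' adj (x :: u) →
      Homotopic adj (X ++ x :: Y) (X ++ x :: u ++ (x :: u).reverse.tail ++ Y)
  | [], x, X, Y, _ => by simpa using Homotopic.refl (adj := adj) (X ++ x :: Y)
  | y :: t, x, X, Y, h => by
      have hxy : adj x y := (List.isChain_cons_cons.mp h).1
      have h2 : List.Chain' adj (y :: t) := (List.isChain_cons_cons.mp h).2
      have ih := Homotopic.ins t y (X ++ [x]) (x :: Y) h2
      have step : Homotopic adj (X ++ x :: Y) (X ++ x :: y :: x :: Y) :=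
        .ret X Y x y hxy
      refine step.trans ?_
      have hrev : (x :: y :: t).reverse.tail = (y :: t).reverse.tail ++ [x] := by
        have hne : (y :: t).reverse ≠ [] := by simp
        rw [List.reverse_cons, List.tail_append_of_ne_nil hne]
      rw [hrev]
      simpa [List.append_assoc] using ih

/-- In a connected graph of diameter at most two, every cycle is homotopically
equivalent (edge-path homotopy in the 2-dimensional clique complex) to a product
of (conjugated) cycles of length at most five. -/
theorem stmt_4 {V : Type*} (G : SimpleGraph V) (hconn : G.Connected)
    (hdiam : ∀ u v : V, G.dist u v ≤ 2) (x₀ : V)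
    (p : List V) (hp : p.Chain' G.Adj)
    (hhead : p.head? = some x₀) (hlast : p.getLast? = some x₀) :
    ∃ L : List (List V), (∀ c ∈ L, ConjSmall G.Adj x₀ c) ∧
      Homotopic G.Adj p (L.foldr glue [x₀]) := by
  -- choose short paths from x₀ to each vertex
  have hexists : ∀ v : V, ∃ g : List V, List.Chain' G.Adj g ∧ g.head? = some x₀ ∧
      g.getLast? = some v ∧ g.length ≤ G.dist x₀ v + 1 := by
    intro v
    obtain ⟨w, hw⟩ := hconn.exists_walk_length_eq_dist x₀ v
    refine ⟨w.support, w.isChain_adj_support, ?_, ?_, ?_⟩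
    · rw [w.support_eq_cons]; rfl
    · rw [List.getLast?_eq_getLast (l := w.support) (by simp), w.getLast_support]
    · rw [w.length_support, hw]
  choose γ hγc hγh hγl hγlen using hexists
  have hγ3 : ∀ v, (γ v).length ≤ 3 := fun v => le_trans (hγlen v) (by
    have := hdiam x₀ v; omega)
  have hγ0 : γ x₀ = [x₀] := by
    have h1 := hγlen x₀
    rw [SimpleGraph.dist_self] at h1
    have h2 := hγh x₀
    rcases h : γ x₀ with _ | ⟨a, _ | ⟨b, l⟩⟩ <;> rw [h] at h1 h2 <;> simp_all
  have aux : ∀ (u : List V) (x : V), List.Chain' G.Adj (x :: u) →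
      (x :: u).getLast? = some x₀ →
      ∃ L : List (List V), (∀ c ∈ L, ConjSmall G.Adj x₀ c) ∧
        Homotopic G.Adj (γ x ++ u) (L.foldr glue [x₀]) ∧
        (L.foldr glue [x₀]).head? = some x₀ := by
    intro u
    induction u with
    | nil =>
        intro x _ hl
        have hx : x = x₀ := by simpa using hl
        subst hx
        exact ⟨[], by simp, by rw [hγ0]; exact .refl _, rfl⟩
    | cons y t ih =>
        intro x hc hl
        have hxy : G.Adj x y := (List.isChain_cons_cons.mp hc).1
        have hc2 : List.Chain' G.Adj (y :: t) := (List.isChain_cons_cons.mp hc).2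
        obtain ⟨L, hL, hhom, hhead'⟩ := ih y hc2 (by
          rw [List.getLast?_cons_cons] at hl; exact hl)
        -- decompositions
        obtain ⟨v, hv⟩ : ∃ v, γ y = x₀ :: v := by
          rcases h : γ y with _ | ⟨a, l⟩
          · have := hγh y; rw [h] at this; simp at this
          · have := hγh y; rw [h] at this; simp at this; exact ⟨l, by rw [this]⟩
        obtain ⟨u', hu'⟩ : ∃ u', (γ y).reverse = y :: u' := by
          have := hγl y
          rcases h : (γ y).reverse with _ | ⟨a, l⟩
          · rw [← List.reverse_reverse (γ y), h] at this; simp at this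
          · refine ⟨l, ?_⟩
            rw [← List.reverse_reverse (γ y), h] at this
            simp [List.getLast?_concat] at this
            rw [this]
        have hchainrev : List.Chain' G.Adj ((γ y).reverse) := by
          rw [List.Chain', List.isChain_reverse]
          exact (hγc y).imp fun a b h => h.symm
        -- insert round trip at y
        have h1 := Homotopic.ins u' y (γ x) t (by rw [← hu']; exact hchainrev)
        rw [← hu', List.reverse_reverse] at h1
        -- h1 : Homotopic (γ x ++ y :: t) (γ x ++ (γ y).reverse ++ (γ y).tail ++ t)
        obtain ⟨F', hF'⟩ : ∃ F', L.foldr glue [x₀] = x₀ :: F' := by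
          rcases h : L.foldr glue [x₀] with _ | ⟨a, l⟩
          · rw [h] at hhead'; simp at hhead'
          · rw [h] at hhead'; simp at hhead'; exact ⟨l, by rw [hhead']⟩
        have h3 := hhom.context (γ x ++ v.reverse) []
        set c : List V := γ x ++ (γ y).reverse with hcdef
        refine ⟨c :: L, ?_, ?_, ?_⟩
        · intro d hd
          rcases List.mem_cons.mp hd with hd | hd
          · -- ConjSmall for c
            subst hd
            obtain ⟨w', hw'⟩ : ∃ w', γ x = x₀ :: w' := by
              rcases h : γ x with _ | ⟨a, l⟩
              · have := hγh x; rw [h] at this; simp at this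
              · have := hγh x; rw [h] at this; simp at this; exact ⟨l, by rw [this]⟩
            refine ⟨[x₀], c, List.isChain_singleton _, ?_, rfl, ?_, ?_, ?_, ?_⟩
            · -- chain' c
              rw [hcdef, List.Chain', List.isChain_append]
              refine ⟨hγc x, hchainrev, ?_⟩
              intro a ha b hb
              rw [hγl x] at ha
              rw [hu'] at hb
              simp at ha hb
              rw [← ha, ← hb]; exact hxy
            · rw [hcdef, hw']; simp
            · rw [hcdef, hv]; simp
            · rw [hcdef]
              have := hγ3 x; have := hγ3 y
              simp only [List.length_append, List.length_reverse]
              omega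
            · rw [hcdef, hw']; simp
          · exact hL d hd
        · have e1 : (γ x ++ v.reverse) ++ (γ y ++ t) ++ [] =
              γ x ++ (γ y).reverse ++ (γ y).tail ++ t := by
            rw [hv]; simp
          have e2 : (γ x ++ v.reverse) ++ (L.foldr glue [x₀]) ++ [] =
              List.foldr glue [x₀] (c :: L) := by
            simp only [List.foldr_cons, glue, hF', hcdef, hv]
            simp
          rw [e1, e2] at h3
          exact h1.trans h3
        · simp only [List.foldr_cons, glue, hcdef]
          rcases h : γ x with _ | ⟨a, l⟩
          · have := hγh x; rw [h] at this; simp at this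
          · have := hγh x; rw [h] at this; simp at this
            simp [this]
  -- conclude
  obtain ⟨u, hu⟩ : ∃ u, p = x₀ :: u := by
    rcases h : p with _ | ⟨a, l⟩
    · rw [h] at hhead; simp at hhead
    · rw [h] at hhead; simp at hhead; exact ⟨l, by rw [hhead]⟩
  subst hu
  obtain ⟨L, hL, hhom, _⟩ := aux u x₀ hp hlast
  exact ⟨L, hL, by rwa [hγ0] at hhom⟩
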